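/- The 'make distinct' operation — applying, for i = 0 to n-1, a swap of qubits qv2[n] and qv2[i] controlled on qv1[i] — maps the product state W_{n+1} ⊗ W_n (where W_{n+1} lives on the first n+1 qubits of qv1 and W_n on the first n qubits of qv2, remaining qubits |0⟩) to the uniform superposition (1/√(n(n+1))) Σ_{0 ≤ i ≤ n, 0 ≤ j ≤ n, i ≠ j} |e_i⟩ ⊗ |e_j⟩. -/

import Mathlib

noncomputable section

/-- One-hot bit string of length `n+1` with the single `1` at position `i`. -/
def oneHot (n : ℕ) (i : Fin (n + 1)) : Fin (n + 1) → Bool :=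
  fun j => decide (j = i)

/-- Swap of the bits at positions `n` and `i` of the second register, controlled on
bit `i` of the first register (a classical reversible map on basis states). -/
def ctrlSwapStep (n : ℕ) (i : Fin (n + 1)) :
    ((Fin (n + 1) → Bool) × (Fin (n + 1) → Bool)) →
      ((Fin (n + 1) → Bool) × (Fin (n + 1) → Bool)) :=
  fun p => (p.1, if p.1 i then p.2 ∘ (Equiv.swap (Fin.last n) i) else p.2)

/-- The `make distinct` operation: apply the controlled swaps for `i = 0, …, n-1` in order. -/
def makeDistinct (n : ℕ) (p : (Fin (n + 1) → Bool) × (Fin (n + 1) → Bool)) :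
    (Fin (n + 1) → Bool) × (Fin (n + 1) → Bool) :=
  (List.finRange n).foldl (fun q i => ctrlSwapStep n i.castSucc q) p

lemma foldl_ctrl (n : ℕ) (i : Fin (n+1)) (l : List (Fin n)) (hl : l.Nodup)
    (g : Fin (n+1) → Bool) :
    l.foldl (fun q k => ctrlSwapStep n k.castSucc q) (oneHot n i, g)
      = (oneHot n i,
          if ∃ k ∈ l, k.castSucc = i then g ∘ Equiv.swap (Fin.last n) i else g) := by
  induction l generalizing g with
  | nil => simp
  | cons a l ih =>
    rw [List.foldl_cons]
    have hstep : ctrlSwapStep n a.castSucc (oneHot n i, g)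
        = (oneHot n i, if a.castSucc = i then g ∘ Equiv.swap (Fin.last n) i else g) := by
      simp [ctrlSwapStep, oneHot]
      by_cases h : a.castSucc = i
      · subst h; simp
      · simp [h, Ne.symm h]
    rw [hstep]
    obtain ⟨ha, hl'⟩ := List.nodup_cons.mp hl
    by_cases h : a.castSucc = i
    · rw [if_pos h, ih hl']
      have hno : ¬ ∃ k ∈ l, k.castSucc = i := by
        rintro ⟨k, hk, hki⟩
        have hka : k = a := Fin.castSucc_injective n (hki.trans h.symm)
        exact ha (hka ▸ hk)
      rw [if_neg hno, if_pos ⟨a, List.mem_cons_self, h⟩]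
    · rw [if_neg h, ih hl']
      by_cases hc : ∃ k ∈ l, k.castSucc = i
      · obtain ⟨k, hk, hki⟩ := hc
        rw [if_pos ⟨k, hk, hki⟩, if_pos ⟨k, List.mem_cons_of_mem a hk, hki⟩]
      · rw [if_neg hc, if_neg]
        rintro ⟨k, hk, hki⟩
        rcases List.mem_cons.mp hk with rfl | hk
        · exact h hki
        · exact hc ⟨k, hk, hki⟩

lemma makeDistinct_oneHot (n : ℕ) (i : Fin (n+1)) (j : Fin n) :
    makeDistinct n (oneHot n i, oneHot n j.castSucc)
      = (oneHot n i,
          oneHot n (if (j.castSucc : Fin (n+1)) = i then Fin.last n else j.castSucc)) := by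
  rw [makeDistinct, foldl_ctrl n i _ (List.nodup_finRange n)]
  by_cases hi : i = Fin.last n
  · subst hi
    rw [if_neg, if_neg (Fin.castSucc_lt_last j).ne]
    rintro ⟨k, _, hk⟩
    exact (Fin.castSucc_lt_last k).ne hk
  · rw [if_pos ⟨i.castPred hi, List.mem_finRange _, Fin.castSucc_castPred i hi⟩]
    have hcomp : oneHot n j.castSucc ∘ Equiv.swap (Fin.last n) i
        = oneHot n (Equiv.swap (Fin.last n) i j.castSucc) := by
      funext k
      simp only [oneHot, Function.comp_apply, decide_eq_decide]
      rw [← Equiv.swap_apply_eq_iff]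
    rw [hcomp]
    by_cases hj : (j.castSucc : Fin (n+1)) = i
    · rw [if_pos hj, hj, Equiv.swap_apply_right]
    · rw [if_neg hj, Equiv.swap_apply_of_ne_of_ne (Fin.castSucc_lt_last j).ne hj]

theorem stmt14 (n : ℕ) :
    ((Real.sqrt ((n + 1) * n) : ℂ))⁻¹ •
        ∑ i : Fin (n + 1), ∑ j : Fin n,
          (EuclideanSpace.single (makeDistinct n (oneHot n i, oneHot n j.castSucc)) 1 :
            EuclideanSpace ℂ ((Fin (n + 1) → Bool) × (Fin (n + 1) → Bool)))
      = ((Real.sqrt ((n + 1) * n) : ℂ))⁻¹ •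
        ∑ p ∈ Finset.univ.filter (fun p : Fin (n + 1) × Fin (n + 1) => p.1 ≠ p.2),
          EuclideanSpace.single (oneHot n p.1, oneHot n p.2) 1 := by
  congr 1
  simp_rw [makeDistinct_oneHot]
  rw [← Finset.sum_product']
  refine Finset.sum_bij
    (fun (p : Fin (n+1) × Fin n) _ =>
      ((p.1, if (p.2.castSucc : Fin (n+1)) = p.1 then Fin.last n else p.2.castSucc) :
        Fin (n+1) × Fin (n+1)))
    ?_ ?_ ?_ ?_
  · rintro ⟨a, b⟩ -
    simp only [Finset.mem_filter, Finset.mem_univ, true_and]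
    by_cases h : (b.castSucc : Fin (n+1)) = a
    · rw [if_pos h]
      exact fun hc => (Fin.castSucc_lt_last b).ne (h.symm ▸ hc)
    · rw [if_neg h]
      exact fun hc => h hc.symm
  · intro x hx y hy hq
    obtain ⟨a, b⟩ := x
    obtain ⟨c, d⟩ := y
    rw [Prod.mk.injEq] at hq
    obtain ⟨h1, h2⟩ := hq
    subst h1
    rw [Prod.mk.injEq]
    refine ⟨rfl, ?_⟩
    by_cases hb : (b.castSucc : Fin (n+1)) = a <;> by_cases hd : (d.castSucc : Fin (n+1)) = a
    · exact Fin.castSucc_injective n (hb.trans hd.symm)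
    · rw [if_pos hb, if_neg hd] at h2
      exact absurd h2.symm (Fin.castSucc_lt_last d).ne
    · rw [if_neg hb, if_pos hd] at h2
      exact absurd h2 (Fin.castSucc_lt_last b).ne
    · rw [if_neg hb, if_neg hd] at h2
      exact Fin.castSucc_injective n h2
  · rintro ⟨a, b⟩ hab
    simp only [Finset.mem_filter, Finset.mem_univ, true_and] at hab
    by_cases hb : b = Fin.last n
    · have ha : a ≠ Fin.last n := fun h => hab (h.trans hb.symm)
      refine ⟨(a, a.castPred ha), Finset.mem_univ _, ?_⟩
      subst hb
      simp [Fin.castSucc_castPred]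
    · refine ⟨(a, b.castPred hb), Finset.mem_univ _, ?_⟩
      rw [Prod.mk.injEq]
      refine ⟨rfl, ?_⟩
      simp [Fin.castSucc_castPred, Ne.symm hab]
  · rintro ⟨a, b⟩ -
    rfl
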